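/- In the CRR market with martingale measure, the game option price V given by the backward recursion V_{N,N} = (1+r)^{-N} Y_N, V_{k,N} = min((1+r)^{-k} X_k, max((1+r)^{-k} Y_k, E[V_{k+1,N}|F_k])) satisfies V_{0,N} = min_σ max_τ E[(1+r)^{-σ∧τ} H(σ,τ)] where H(s,t) = X_s 1_{s<t} + Y_t 1_{t≤s}, the min and max over stopping times with values in {0,…,N}. -/

import Mathlib

open MeasureTheory

lemma gm_minmax_le {x y c : ℝ} (hyx : y ≤ x) (hne : min x (max y c) ≠ y) :
    min x (max y c) ≤ c := by
  rcases le_total c y with h | h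
  · exact absurd (by rw [max_eq_left h, min_eq_right hyx]) hne
  · rw [max_eq_right h]; exact min_le_right _ _

lemma gm_le_minmax {x y c : ℝ} (hne : min x (max y c) ≠ x) : c ≤ min x (max y c) := by
  rcases min_cases x (max y c) with ⟨h1, _⟩ | ⟨h1, _⟩
  · exact absurd h1 hne
  · rw [h1]; exact le_max_right _ _

theorem crr_game_option_price {Ω : Type*} {m : MeasurableSpace Ω} {μ : Measure Ω}
    [IsProbabilityMeasure μ] (ℱ : Filtration ℕ m) (N : ℕ) (r : ℝ) (hr : 0 < r)
    (X Y V : ℕ → Ω → ℝ)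
    (hX : Adapted ℱ X) (hY : Adapted ℱ Y)
    (hXi : ∀ n, Integrable (X n) μ) (hYi : ∀ n, Integrable (Y n) μ)
    (hY0 : ∀ n ω, 0 ≤ Y n ω) (hord : ∀ n < N, ∀ ω, Y n ω ≤ X n ω) (hterm : X N = Y N)
    (hVN : V N = fun ω => ((1 + r)⁻¹) ^ N * Y N ω)
    (hVrec : ∀ k < N, V k = fun ω =>
      min (((1 + r)⁻¹) ^ k * X k ω)
        (max (((1 + r)⁻¹) ^ k * Y k ω) ((μ[V (k + 1) | ℱ k]) ω))) :
    (∫ ω, V 0 ω ∂μ) =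
      ⨅ σ : {σ : Ω → ℕ // IsStoppingTime ℱ (fun ω => (σ ω : WithTop ℕ)) ∧ ∀ ω, σ ω ≤ N},
        ⨆ τ : {τ : Ω → ℕ // IsStoppingTime ℱ (fun ω => (τ ω : WithTop ℕ)) ∧ ∀ ω, τ ω ≤ N},
          ∫ ω, ((1 + r)⁻¹) ^ (min (σ.1 ω) (τ.1 ω)) *
            (if σ.1 ω < τ.1 ω then X (σ.1 ω) ω else Y (τ.1 ω) ω) ∂μ := by
  classical
  set a : ℝ := (1 + r)⁻¹ with ha_def
  have ha0 : (0:ℝ) ≤ a := by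
    have : (0:ℝ) < 1 + r := by linarith
    positivity
  have hX0 : ∀ k, k ≤ N → ∀ ω, 0 ≤ X k ω := by
    intro k hk ω
    rcases lt_or_eq_of_le hk with h | h
    · exact (hY0 k ω).trans (hord k h ω)
    · subst h; rw [hterm]; exact hY0 k ω
  have hYX : ∀ k, k ≤ N → ∀ ω, Y k ω ≤ X k ω := by
    intro k hk ω
    rcases lt_or_eq_of_le hk with h | h
    · exact hord k h ω
    · subst h; rw [hterm]
  -- regularity of V on [0, N]
  have hVreg : ∀ d k, N = k + d → StronglyMeasurable[ℱ k] (V k) ∧ Integrable (V k) μ := by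
    intro d
    induction d with
    | zero =>
      intro k hk
      have hkN : k = N := by omega
      subst hkN
      rw [hVN]
      exact ⟨(((hY k).const_mul _)).stronglyMeasurable, (hYi k).const_mul _⟩
    | succ d ih =>
      intro k hk
      have hkN : k < N := by omega
      obtain ⟨_, hint1⟩ := ih (k + 1) (by omega)
      rw [hVrec k hkN]
      constructor
      · exact (((hX k).const_mul _).min
          (((hY k).const_mul _).max
            (stronglyMeasurable_condExp).measurable)).stronglyMeasurable
      · exact ((hXi k).const_mul _).inf (((hYi k).const_mul _).sup integrable_condExp)
  have hVsm : ∀ k, k ≤ N → StronglyMeasurable[ℱ k] (V k) :=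
    fun k hk => (hVreg (N - k) k (by omega)).1
  have hVint : ∀ k, k ≤ N → Integrable (V k) μ :=
    fun k hk => (hVreg (N - k) k (by omega)).2
  set V' : ℕ → Ω → ℝ := fun k => V (min k N) with hV'def
  have hV'ad : StronglyAdapted ℱ V' :=
    fun k => (hVsm (min k N) (min_le_right _ _)).mono (ℱ.mono (min_le_left _ _))
  have hV'int : ∀ k, Integrable (V' k) μ := fun k => hVint _ (min_le_right _ _)
  -- bounds
  have hVleX : ∀ k, k ≤ N → ∀ ω, V k ω ≤ a ^ k * X k ω := by
    intro k hk ω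
    rcases lt_or_eq_of_le hk with h | h
    · simp only [hVrec k h]; exact min_le_left _ _
    · subst h; rw [hVN, hterm]
  have hVgeY : ∀ k, k ≤ N → ∀ ω, a ^ k * Y k ω ≤ V k ω := by
    intro k hk ω
    rcases lt_or_eq_of_le hk with h | h
    · simp only [hVrec k h]
      exact le_min (mul_le_mul_of_nonneg_left (hord k h ω) (pow_nonneg ha0 k)) (le_max_left _ _)
    · subst h; rw [hVN]
  -- measurability of stopping times
  have hmeasST : ∀ σ : Ω → ℕ, IsStoppingTime ℱ (fun ω => (σ ω : WithTop ℕ)) → Measurable σ := by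
    intro σ hσ
    apply measurable_to_countable'
    intro i
    have h := hσ.measurableSet_eq i
    have h' : σ ⁻¹' {i} = {ω | (σ ω : WithTop ℕ) = i} := by ext ω; simp
    rw [h']
    exact ℱ.le i _ h
  -- integrability of payoff
  have hZint : ∀ σ τ : Ω → ℕ, IsStoppingTime ℱ (fun ω => (σ ω : WithTop ℕ)) → IsStoppingTime ℱ (fun ω => (τ ω : WithTop ℕ)) →
      (∀ ω, σ ω ≤ N) → (∀ ω, τ ω ≤ N) →
      Integrable (fun ω => a ^ (min (σ ω) (τ ω)) *
        (if σ ω < τ ω then X (σ ω) ω else Y (τ ω) ω)) μ := by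
    intro σ τ hσ hτ hσN hτN
    have hs : MeasurableSet {ω | σ ω < τ ω} := measurableSet_lt (hmeasST σ hσ) (hmeasST τ hτ)
    have h1 : Integrable (stoppedValue (fun k ω => a ^ k * X k ω) (fun ω => (σ ω : WithTop ℕ))) μ :=
      integrable_stoppedValue ℕ hσ (fun n => (hXi n).const_mul _) (fun ω => WithTop.coe_le_coe.2 (hσN ω))
    have h2 : Integrable (stoppedValue (fun k ω => a ^ k * Y k ω) (fun ω => (τ ω : WithTop ℕ))) μ :=
      integrable_stoppedValue ℕ hτ (fun n => (hYi n).const_mul _) (fun ω => WithTop.coe_le_coe.2 (hτN ω))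
    have hEq : (fun ω => a ^ (min (σ ω) (τ ω)) * (if σ ω < τ ω then X (σ ω) ω else Y (τ ω) ω))
        = {ω | σ ω < τ ω}.indicator (stoppedValue (fun k ω => a ^ k * X k ω) (fun ω => (σ ω : WithTop ℕ)))
          + {ω | σ ω < τ ω}ᶜ.indicator (stoppedValue (fun k ω => a ^ k * Y k ω) (fun ω => (τ ω : WithTop ℕ))) := by
      funext ω
      by_cases h : σ ω < τ ω
      · have hm : ω ∈ {ω | σ ω < τ ω} := h
        rw [Pi.add_apply, Set.indicator_of_mem hm,
          Set.indicator_of_notMem (Set.notMem_compl_iff.2 hm), add_zero, if_pos h, min_eq_left h.le]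
        rfl
      · have hm : ω ∉ {ω | σ ω < τ ω} := h
        rw [Pi.add_apply, Set.indicator_of_notMem hm,
          Set.indicator_of_mem (Set.mem_compl hm), zero_add, if_neg h,
          min_eq_right (not_lt.1 h)]
        rfl
    rw [hEq]
    exact (h1.indicator hs).add (h2.indicator hs.compl)
  -- hitting times
  set uY : ℕ → Ω → ℝ := fun k ω => V (min k N) ω - a ^ (min k N) * Y (min k N) ω with huY
  have huYad : Adapted ℱ uY := by
    intro k
    exact (((hVsm (min k N) (min_le_right _ _)).mono (ℱ.mono (min_le_left _ _))).sub
      ((((hY (min k N)).mono (ℱ.mono (min_le_left _ _)) le_rfl).const_mul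
        _).stronglyMeasurable)).measurable
  set τs : Ω → ℕ := hittingBtwn uY {0} 0 N with hτsdef
  have hτst : IsStoppingTime ℱ (fun ω => (τs ω : WithTop ℕ)) := Adapted.isStoppingTime_hittingBtwn huYad (measurableSet_singleton 0)
  have hτsN : ∀ ω, τs ω ≤ N := fun ω => hittingBtwn_le ω
  have huYN : ∀ ω, uY N ω = 0 := by
    intro ω; simp [huY, hVN]
  have hτhit : ∀ ω, V (τs ω) ω = a ^ (τs ω) * Y (τs ω) ω := by
    intro ω
    have h := hittingBtwn_mem_set (u := uY) (s := ({0} : Set ℝ)) (n := 0) (m := N) (ω := ω)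
      ⟨N, ⟨Nat.zero_le N, le_rfl⟩, by simpa using huYN ω⟩
    have hm : min (τs ω) N = τs ω := min_eq_left (hτsN ω)
    rw [← hτsdef] at h
    simpa [huY, hm, sub_eq_zero] using h
  have hτbefore : ∀ ω k, k < τs ω → V k ω ≠ a ^ k * Y k ω := by
    intro ω k hk
    have h := notMem_of_lt_hittingBtwn (u := uY) (s := ({0} : Set ℝ)) (n := 0) (m := N) (ω := ω)
      hk (Nat.zero_le k)
    have hm : min k N = k := min_eq_left (le_trans hk.le (hτsN ω))
    simpa [huY, hm, sub_eq_zero] using h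
  set uX : ℕ → Ω → ℝ := fun k ω => V (min k N) ω - a ^ (min k N) * X (min k N) ω with huX
  have huXad : Adapted ℱ uX := by
    intro k
    exact (((hVsm (min k N) (min_le_right _ _)).mono (ℱ.mono (min_le_left _ _))).sub
      ((((hX (min k N)).mono (ℱ.mono (min_le_left _ _)) le_rfl).const_mul
        _).stronglyMeasurable)).measurable
  set σs : Ω → ℕ := hittingBtwn uX {0} 0 N with hσsdef
  have hσst : IsStoppingTime ℱ (fun ω => (σs ω : WithTop ℕ)) := Adapted.isStoppingTime_hittingBtwn huXad (measurableSet_singleton 0)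
  have hσsN : ∀ ω, σs ω ≤ N := fun ω => hittingBtwn_le ω
  have huXN : ∀ ω, uX N ω = 0 := by
    intro ω; simp [huX, hVN, hterm]
  have hσhit : ∀ ω, V (σs ω) ω = a ^ (σs ω) * X (σs ω) ω := by
    intro ω
    have h := hittingBtwn_mem_set (u := uX) (s := ({0} : Set ℝ)) (n := 0) (m := N) (ω := ω)
      ⟨N, ⟨Nat.zero_le N, le_rfl⟩, by simpa using huXN ω⟩
    have hm : min (σs ω) N = σs ω := min_eq_left (hσsN ω)
    rw [← hσsdef] at h
    simpa [huX, hm, sub_eq_zero] using h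
  have hσbefore : ∀ ω k, k < σs ω → V k ω ≠ a ^ k * X k ω := by
    intro ω k hk
    have h := notMem_of_lt_hittingBtwn (u := uX) (s := ({0} : Set ℝ)) (n := 0) (m := N) (ω := ω)
      hk (Nat.zero_le k)
    have hm : min k N = k := min_eq_left (le_trans hk.le (hσsN ω))
    simpa [huX, hm, sub_eq_zero] using h
  -- stopped processes
  set WY : ℕ → Ω → ℝ := MeasureTheory.stoppedProcess V' (fun ω => (τs ω : WithTop ℕ)) with hWYdef
  have hWYad : StronglyAdapted ℱ WY := hV'ad.stoppedProcess_of_discrete hτst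
  have hWYint : ∀ n, Integrable (WY n) μ := fun n => integrable_stoppedProcess hτst hV'int n
  have hWYeq : ∀ n ω, WY n ω = V (min n (τs ω)) ω := by
    intro n ω
    show V' (min n (τs ω)) ω = _
    simp only [hV'def]
    congr 1
    have := hτsN ω; omega
  set WX : ℕ → Ω → ℝ := MeasureTheory.stoppedProcess V' (fun ω => (σs ω : WithTop ℕ)) with hWXdef
  have hWXad : StronglyAdapted ℱ WX := hV'ad.stoppedProcess_of_discrete hσst
  have hWXint : ∀ n, Integrable (WX n) μ := fun n => integrable_stoppedProcess hσst hV'int n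
  have hWXeq : ∀ n ω, WX n ω = V (min n (σs ω)) ω := by
    intro n ω
    show V' (min n (σs ω)) ω = _
    simp only [hV'def]
    congr 1
    have := hσsN ω; omega
  -- WY is a submartingale
  have hWYsub : Submartingale WY ℱ μ := by
    refine submartingale_nat hWYad hWYint fun i => ?_
    set A : Set Ω := {ω | i < τs ω} with hA
    have hAmeas : MeasurableSet[ℱ i] A := by
      have h := (hτst i).compl
      convert h using 1
      ext ω; simp [hA, not_le]
    have hdec : WY (i + 1) = A.indicator (V' (i + 1)) + Aᶜ.indicator (WY i) := by
      funext ω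
      by_cases hω : i < τs ω
      · have hmem : ω ∈ A := hω
        rw [Pi.add_apply, Set.indicator_of_mem hmem,
          Set.indicator_of_notMem (Set.notMem_compl_iff.2 hmem), add_zero]
        show V' (min (i + 1) (τs ω)) ω = _
        rw [min_eq_left (by omega)]
      · have hmem : ω ∉ A := hω
        rw [Pi.add_apply, Set.indicator_of_notMem hmem,
          Set.indicator_of_mem (Set.mem_compl hmem), zero_add]
        show V' (min (i + 1) (τs ω)) ω = V' (min i (τs ω)) ω
        rw [min_eq_right (by omega), min_eq_right (by omega)]
    have hce : μ[WY (i + 1) | ℱ i] =ᵐ[μ]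
        A.indicator (μ[V' (i + 1) | ℱ i]) + Aᶜ.indicator (WY i) := by
      rw [hdec]
      refine (condExp_add ((hV'int (i + 1)).indicator (ℱ.le i _ hAmeas))
        ((hWYint i).indicator (ℱ.le i _ hAmeas.compl)) _).trans ?_
      have e1 : μ[A.indicator (V' (i + 1)) | ℱ i] =ᵐ[μ] A.indicator (μ[V' (i + 1) | ℱ i]) :=
        condExp_indicator (hV'int (i + 1)) hAmeas
      have e2 : μ[Aᶜ.indicator (WY i) | ℱ i] = Aᶜ.indicator (WY i) :=
        condExp_of_stronglyMeasurable (ℱ.le i) ((hWYad i).indicator hAmeas.compl)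
          ((hWYint i).indicator (ℱ.le i _ hAmeas.compl))
      rw [e2]
      exact e1.add (Filter.EventuallyEq.refl _ _)
    filter_upwards [hce] with ω hω
    rw [hω]
    by_cases hmem : ω ∈ A
    · have hlt : i < τs ω := hmem
      have hiN : i < N := lt_of_lt_of_le hlt (hτsN ω)
      rw [Pi.add_apply, Set.indicator_of_mem hmem,
        Set.indicator_of_notMem (Set.notMem_compl_iff.2 hmem), add_zero]
      have hWYi : WY i ω = V i ω := by rw [hWYeq i ω, min_eq_left hlt.le]
      have hV'V : V' (i + 1) = V (i + 1) := by
        simp only [hV'def]; rw [min_eq_left (by omega)]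
      rw [hWYi, hV'V]
      have hne := hτbefore ω i hlt
      simp only [hVrec i hiN] at hne ⊢
      exact gm_minmax_le (mul_le_mul_of_nonneg_left (hord i hiN ω) (pow_nonneg ha0 i)) hne
    · rw [Pi.add_apply, Set.indicator_of_notMem hmem,
        Set.indicator_of_mem (Set.mem_compl hmem), zero_add]
  -- WX is a supermartingale
  have hWXsup : Supermartingale WX ℱ μ := by
    refine supermartingale_nat hWXad hWXint fun i => ?_
    set A : Set Ω := {ω | i < σs ω} with hA
    have hAmeas : MeasurableSet[ℱ i] A := by
      have h := (hσst i).compl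
      convert h using 1
      ext ω; simp [hA, not_le]
    have hdec : WX (i + 1) = A.indicator (V' (i + 1)) + Aᶜ.indicator (WX i) := by
      funext ω
      by_cases hω : i < σs ω
      · have hmem : ω ∈ A := hω
        rw [Pi.add_apply, Set.indicator_of_mem hmem,
          Set.indicator_of_notMem (Set.notMem_compl_iff.2 hmem), add_zero]
        show V' (min (i + 1) (σs ω)) ω = _
        rw [min_eq_left (by omega)]
      · have hmem : ω ∉ A := hω
        rw [Pi.add_apply, Set.indicator_of_notMem hmem,
          Set.indicator_of_mem (Set.mem_compl hmem), zero_add]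
        show V' (min (i + 1) (σs ω)) ω = V' (min i (σs ω)) ω
        rw [min_eq_right (by omega), min_eq_right (by omega)]
    have hce : μ[WX (i + 1) | ℱ i] =ᵐ[μ]
        A.indicator (μ[V' (i + 1) | ℱ i]) + Aᶜ.indicator (WX i) := by
      rw [hdec]
      refine (condExp_add ((hV'int (i + 1)).indicator (ℱ.le i _ hAmeas))
        ((hWXint i).indicator (ℱ.le i _ hAmeas.compl)) _).trans ?_
      have e1 : μ[A.indicator (V' (i + 1)) | ℱ i] =ᵐ[μ] A.indicator (μ[V' (i + 1) | ℱ i]) :=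
        condExp_indicator (hV'int (i + 1)) hAmeas
      have e2 : μ[Aᶜ.indicator (WX i) | ℱ i] = Aᶜ.indicator (WX i) :=
        condExp_of_stronglyMeasurable (ℱ.le i) ((hWXad i).indicator hAmeas.compl)
          ((hWXint i).indicator (ℱ.le i _ hAmeas.compl))
      rw [e2]
      exact e1.add (Filter.EventuallyEq.refl _ _)
    filter_upwards [hce] with ω hω
    rw [hω]
    by_cases hmem : ω ∈ A
    · have hlt : i < σs ω := hmem
      have hiN : i < N := lt_of_lt_of_le hlt (hσsN ω)
      rw [Pi.add_apply, Set.indicator_of_mem hmem,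
        Set.indicator_of_notMem (Set.notMem_compl_iff.2 hmem), add_zero]
      have hWXi : WX i ω = V i ω := by rw [hWXeq i ω, min_eq_left hlt.le]
      have hV'V : V' (i + 1) = V (i + 1) := by
        simp only [hV'def]; rw [min_eq_left (by omega)]
      rw [hWXi, hV'V]
      have hne := hσbefore ω i hlt
      simp only [hVrec i hiN] at hne ⊢
      exact gm_le_minmax hne
    · rw [Pi.add_apply, Set.indicator_of_notMem hmem,
        Set.indicator_of_mem (Set.mem_compl hmem), zero_add]
  -- lower bound: for every stopping time σ, E[V0] ≤ E[Z(σ, τs)]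
  have hlow : ∀ σ : Ω → ℕ, IsStoppingTime ℱ (fun ω => (σ ω : WithTop ℕ)) → (∀ ω, σ ω ≤ N) →
      (∫ ω, V 0 ω ∂μ) ≤ ∫ ω, a ^ (min (σ ω) (τs ω)) *
        (if σ ω < τs ω then X (σ ω) ω else Y (τs ω) ω) ∂μ := by
    intro σ hσ hσN
    set ρ : Ω → ℕ := fun ω => min (σ ω) (τs ω) with hρdef
    have hρst : IsStoppingTime ℱ (fun ω => (ρ ω : WithTop ℕ)) := hσ.min hτst
    have hρN : ∀ ω, ρ ω ≤ N := fun ω => le_trans (min_le_left _ _) (hσN ω)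
    have h1 := hWYsub.expected_stoppedValue_mono (isStoppingTime_const ℱ 0) hρst
      (fun ω => WithTop.coe_le_coe.2 (Nat.zero_le _)) (fun ω => WithTop.coe_le_coe.2 (hρN ω))
    have e0 : stoppedValue WY (fun _ => WithTop.some (0 : ℕ)) = V 0 := by
      funext ω
      show WY 0 ω = V 0 ω
      rw [hWYeq]
      simp
    have e1 : stoppedValue WY (fun ω => (ρ ω : WithTop ℕ)) = fun ω => V (ρ ω) ω := by
      funext ω
      show WY (ρ ω) ω = _
      rw [hWYeq, min_eq_left (min_le_right _ _)]
    rw [e0, e1] at h1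
    refine le_trans h1 (integral_mono ?_ (hZint σ τs hσ hτst hσN hτsN) ?_)
    · have he : (fun ω => V (ρ ω) ω) = stoppedValue V' (fun ω => (ρ ω : WithTop ℕ)) := by
        funext ω
        show _ = V' (ρ ω) ω
        simp only [hV'def]
        rw [min_eq_left (hρN ω)]
      rw [he]
      exact integrable_stoppedValue ℕ hρst hV'int (fun ω => WithTop.coe_le_coe.2 (hρN ω))
    · intro ω
      by_cases h : σ ω < τs ω
      · have hh : ρ ω = σ ω := min_eq_left h.le
        simp only [hρdef]
        rw [if_pos h, min_eq_left h.le]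
        exact hVleX (σ ω) (hσN ω) ω
      · have hh : ρ ω = τs ω := min_eq_right (not_lt.1 h)
        simp only [hρdef]
        rw [if_neg h, min_eq_right (not_lt.1 h)]
        exact le_of_eq (hτhit ω)
  -- upper bound: for every stopping time τ, E[Z(σs, τ)] ≤ E[V0]
  have hupp : ∀ τ : Ω → ℕ, IsStoppingTime ℱ (fun ω => (τ ω : WithTop ℕ)) → (∀ ω, τ ω ≤ N) →
      (∫ ω, a ^ (min (σs ω) (τ ω)) *
        (if σs ω < τ ω then X (σs ω) ω else Y (τ ω) ω) ∂μ) ≤ ∫ ω, V 0 ω ∂μ := by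
    intro τ hτ hτN
    set ρ : Ω → ℕ := fun ω => min (σs ω) (τ ω) with hρdef
    have hρst : IsStoppingTime ℱ (fun ω => (ρ ω : WithTop ℕ)) := hσst.min hτ
    have hρN : ∀ ω, ρ ω ≤ N := fun ω => le_trans (min_le_left _ _) (hσsN ω)
    have h1 := hWXsup.neg.expected_stoppedValue_mono (isStoppingTime_const ℱ 0) hρst
      (fun ω => WithTop.coe_le_coe.2 (Nat.zero_le _)) (fun ω => WithTop.coe_le_coe.2 (hρN ω))
    have e0 : stoppedValue (-WX) (fun _ => WithTop.some (0 : ℕ)) = fun ω => -(V 0 ω) := by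
      funext ω
      show -(WX 0 ω) = _
      rw [hWXeq]
      simp
    have e1 : stoppedValue (-WX) (fun ω => (ρ ω : WithTop ℕ)) = fun ω => -(V (ρ ω) ω) := by
      funext ω
      show -(WX (ρ ω) ω) = _
      rw [hWXeq, min_eq_left (min_le_left _ _)]
    rw [e0, e1] at h1
    have h2 : (∫ ω, V (ρ ω) ω ∂μ) ≤ ∫ ω, V 0 ω ∂μ := by
      rw [← neg_le_neg_iff, ← integral_neg, ← integral_neg]
      exact h1
    refine le_trans (integral_mono (hZint σs τ hσst hτ hσsN hτN) ?_ ?_) h2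
    · have he : (fun ω => V (ρ ω) ω) = stoppedValue V' (fun ω => (ρ ω : WithTop ℕ)) := by
        funext ω
        show _ = V' (ρ ω) ω
        simp only [hV'def]
        rw [min_eq_left (hρN ω)]
      rw [he]
      exact integrable_stoppedValue ℕ hρst hV'int (fun ω => WithTop.coe_le_coe.2 (hρN ω))
    · intro ω
      by_cases h : σs ω < τ ω
      · simp only [hρdef]
        rw [if_pos h, min_eq_left h.le]
        exact le_of_eq (hσhit ω).symm
      · simp only [hρdef]
        rw [if_neg h, min_eq_right (not_lt.1 h)]
        exact hVgeY (τ ω) (hτN ω) ω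
  -- uniform upper bound for BddAbove
  have hCint : Integrable (fun ω => ∑ k ∈ Finset.range (N + 1), a ^ k * X k ω) μ :=
    integrable_finset_sum _ fun k _ => (hXi k).const_mul _
  have hbddA : ∀ σ τ : Ω → ℕ, IsStoppingTime ℱ (fun ω => (σ ω : WithTop ℕ)) → IsStoppingTime ℱ (fun ω => (τ ω : WithTop ℕ)) →
      (∀ ω, σ ω ≤ N) → (∀ ω, τ ω ≤ N) →
      (∫ ω, a ^ (min (σ ω) (τ ω)) * (if σ ω < τ ω then X (σ ω) ω else Y (τ ω) ω) ∂μ) ≤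
        ∫ ω, ∑ k ∈ Finset.range (N + 1), a ^ k * X k ω ∂μ := by
    intro σ τ hσ hτ hσN hτN
    refine integral_mono (hZint σ τ hσ hτ hσN hτN) hCint fun ω => ?_
    have hterms : ∀ k ∈ Finset.range (N + 1), 0 ≤ a ^ k * X k ω := fun k hk =>
      mul_nonneg (pow_nonneg ha0 k) (hX0 k (Nat.lt_succ_iff.1 (Finset.mem_range.1 hk)) ω)
    by_cases h : σ ω < τ ω
    · rw [if_pos h, min_eq_left h.le]
      exact Finset.single_le_sum hterms (Finset.mem_range.2 (by have := hσN ω; omega))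
    · rw [if_neg h, min_eq_right (not_lt.1 h)]
      calc a ^ (τ ω) * Y (τ ω) ω ≤ a ^ (τ ω) * X (τ ω) ω :=
            mul_le_mul_of_nonneg_left (hYX _ (hτN ω) ω) (pow_nonneg ha0 _)
        _ ≤ _ := Finset.single_le_sum hterms (Finset.mem_range.2 (by have := hτN ω; omega))
  -- assembly
  haveI : Nonempty {τ : Ω → ℕ // IsStoppingTime ℱ (fun ω => (τ ω : WithTop ℕ)) ∧ ∀ ω, τ ω ≤ N} :=
    ⟨⟨fun _ => 0, isStoppingTime_const ℱ 0, fun ω => Nat.zero_le N⟩⟩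
  have hEVlow : ∀ σ : {σ : Ω → ℕ // IsStoppingTime ℱ (fun ω => (σ ω : WithTop ℕ)) ∧ ∀ ω, σ ω ≤ N},
      (∫ ω, V 0 ω ∂μ) ≤
        ⨆ τ : {τ : Ω → ℕ // IsStoppingTime ℱ (fun ω => (τ ω : WithTop ℕ)) ∧ ∀ ω, τ ω ≤ N},
          ∫ ω, a ^ (min (σ.1 ω) (τ.1 ω)) *
            (if σ.1 ω < τ.1 ω then X (σ.1 ω) ω else Y (τ.1 ω) ω) ∂μ := by
    intro σ
    have hba : BddAbove (Set.range fun τ : {τ : Ω → ℕ // IsStoppingTime ℱ (fun ω => (τ ω : WithTop ℕ)) ∧ ∀ ω, τ ω ≤ N} =>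
        ∫ ω, a ^ (min (σ.1 ω) (τ.1 ω)) *
          (if σ.1 ω < τ.1 ω then X (σ.1 ω) ω else Y (τ.1 ω) ω) ∂μ) := by
      refine ⟨∫ ω, ∑ k ∈ Finset.range (N + 1), a ^ k * X k ω ∂μ, ?_⟩
      rintro x ⟨τ, rfl⟩
      exact hbddA σ.1 τ.1 σ.2.1 τ.2.1 σ.2.2 τ.2.2
    exact le_trans (hlow σ.1 σ.2.1 σ.2.2)
      (le_ciSup hba (⟨τs, hτst, hτsN⟩ : {τ : Ω → ℕ // IsStoppingTime ℱ (fun ω => (τ ω : WithTop ℕ)) ∧ ∀ ω, τ ω ≤ N}))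
  refine le_antisymm (le_ciInf hEVlow) ?_
  refine ciInf_le_of_le ⟨∫ ω, V 0 ω ∂μ, ?_⟩
    (⟨σs, hσst, hσsN⟩ : {σ : Ω → ℕ // IsStoppingTime ℱ (fun ω => (σ ω : WithTop ℕ)) ∧ ∀ ω, σ ω ≤ N}) ?_
  · rintro x ⟨σ, rfl⟩
    exact hEVlow σ
  · exact ciSup_le fun τ => hupp τ.1 τ.2.1 τ.2.2
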